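/- For every positive integer j, the derivative of the Dirichlet beta function at the negative odd integer 1−2j satisfies β'(1−2j) = (−1)^{j+1} · (π/2)^{1−2j} · (2j−1)! · β(2j). -/

import Mathlib

open Real

/-- The Dirichlet beta function: the entire continuation of
`∑_{n=1}^∞ (-1)^(n-1) (2n-1)^(-s)`, realised as the L-function of the nontrivial
Dirichlet character mod 4. -/
noncomputable def dirichletBeta (s : ℂ) : ℂ :=
  DirichletCharacter.LFunction (ZMod.χ₄.ringHomComp (Int.castRingHom ℂ)) s

namespace DirichletBetaAux

open Complex

/-- The function `χ₄` as a `ℂ`-valued function on `ZMod 4`. -/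
noncomputable def Φ : ZMod 4 → ℂ := fun j => ((ZMod.χ₄ j : ℤ) : ℂ)

lemma beta_eq (s : ℂ) : dirichletBeta s = ZMod.LFunction Φ s := by
  have : ⇑(ZMod.χ₄.ringHomComp (Int.castRingHom ℂ)) = Φ := by
    funext j
    simp [Φ, MulChar.ringHomComp_apply]
  rw [dirichletBeta, DirichletCharacter.LFunction, this]

lemma LFunction_const_mul {N : ℕ} [NeZero N] (c : ℂ) (Ψ : ZMod N → ℂ) (s : ℂ) :
    ZMod.LFunction (fun j => c * Ψ j) s = c * ZMod.LFunction Ψ s := by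
  simp only [ZMod.LFunction, Finset.mul_sum]
  exact Finset.sum_congr rfl fun i _ => by ring

lemma std1 : ZMod.stdAddChar (1 : ZMod 4) = I := by
  have h : ((1 : ℤ) : ZMod 4) = 1 := by norm_num
  rw [← h, ZMod.stdAddChar_coe]
  rw [show 2 * (π : ℂ) * I * ((1 : ℤ) : ℂ) / ((4 : ℕ) : ℂ) = (π / 2) * I by push_cast; ring,
    Complex.exp_mul_I, Complex.cos_pi_div_two, Complex.sin_pi_div_two]
  ring

lemma std2 : ZMod.stdAddChar (2 : ZMod 4) = -1 := by
  have h : ((2 : ℤ) : ZMod 4) = 2 := by norm_num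
  rw [← h, ZMod.stdAddChar_coe]
  rw [show 2 * (π : ℂ) * I * ((2 : ℤ) : ℂ) / ((4 : ℕ) : ℂ) = (π : ℂ) * I by push_cast; ring,
    Complex.exp_pi_mul_I]

lemma std3 : ZMod.stdAddChar (3 : ZMod 4) = -I := by
  have h : (3 : ZMod 4) = 2 + 1 := by decide
  rw [h, AddChar.map_add_eq_mul, std2, std1]
  ring

lemma std0 : ZMod.stdAddChar (0 : ZMod 4) = 1 := AddChar.map_zero_eq_one _

lemma dft_chi4 (k : ZMod 4) : ZMod.dft Φ k = (-2 * I) * Φ k := by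
  rw [ZMod.dft_apply]
  simp only [smul_eq_mul]
  have hsum : ∀ f : ZMod 4 → ℂ, ∑ j : ZMod 4, f j = f 0 + f 1 + f 2 + f 3 := fun f =>
    Fin.sum_univ_four f
  rw [hsum]
  have h0 : Φ (0 : ZMod 4) = 0 := by simp [Φ]
  have h1 : Φ (1 : ZMod 4) = 1 := by simp [Φ]
  have h2 : Φ (2 : ZMod 4) = 0 := by simp [Φ]
  have h3 : Φ (3 : ZMod 4) = -1 := by simp [Φ]
  fin_cases k
  · show ZMod.stdAddChar (-(0 * 0)) * Φ 0 + ZMod.stdAddChar (-(1 * 0)) * Φ 1 +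
      ZMod.stdAddChar (-(2 * 0)) * Φ 2 + ZMod.stdAddChar (-(3 * 0)) * Φ 3 = -2 * I * Φ 0
    norm_num [h0, h1, h2, h3, std0]
  · show ZMod.stdAddChar (-(0 * 1)) * Φ 0 + ZMod.stdAddChar (-(1 * 1)) * Φ 1 +
      ZMod.stdAddChar (-(2 * 1)) * Φ 2 + ZMod.stdAddChar (-(3 * 1)) * Φ 3 = -2 * I * Φ 1
    have e1 : -((1 : ZMod 4) * 1) = 3 := by decide
    have e3 : -((3 : ZMod 4) * 1) = 1 := by decide
    rw [e1, e3, h0, h1, h2, h3, std1, std3]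
    ring
  · show ZMod.stdAddChar (-(0 * 2)) * Φ 0 + ZMod.stdAddChar (-(1 * 2)) * Φ 1 +
      ZMod.stdAddChar (-(2 * 2)) * Φ 2 + ZMod.stdAddChar (-(3 * 2)) * Φ 3 = -2 * I * Φ 2
    have e1 : -((1 : ZMod 4) * 2) = 2 := by decide
    have e3 : -((3 : ZMod 4) * 2) = 2 := by decide
    rw [e1, e3, h0, h1, h2, h3, std2]
    ring
  · show ZMod.stdAddChar (-(0 * 3)) * Φ 0 + ZMod.stdAddChar (-(1 * 3)) * Φ 1 +
      ZMod.stdAddChar (-(2 * 3)) * Φ 2 + ZMod.stdAddChar (-(3 * 3)) * Φ 3 = -2 * I * Φ 3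
    have e1 : -((1 : ZMod 4) * 3) = 1 := by decide
    have e3 : -((3 : ZMod 4) * 3) = 3 := by decide
    rw [e1, e3, h0, h1, h2, h3, std1, std3]
    ring

lemma beta_one_sub {s : ℂ} (hs : 0 < s.re) :
    dirichletBeta (1 - s) =
      ((4 : ℂ) ^ s * (2 * (π : ℂ)) ^ (-s) * Complex.Gamma s * dirichletBeta s) *
        Complex.sin ((π : ℂ) * s / 2) := by
  have hsn : ∀ n : ℕ, s ≠ -(n : ℂ) := by
    intro n h
    rw [h] at hs
    simp only [Complex.neg_re, Complex.natCast_re] at hs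
    have h2 : (0:ℝ) ≤ n := n.cast_nonneg
    linarith
  have hΦ0 : Φ 0 = 0 := by simp [Φ]
  have key := ZMod.LFunction_one_sub Φ hsn (Or.inl hΦ0)
  rw [beta_eq, key]
  have hneg : (fun x : ZMod 4 => Φ (-x)) = fun x => (-1 : ℂ) * Φ x := by
    funext x
    have : ZMod.χ₄ (-x) = -ZMod.χ₄ x := by revert x; decide
    simp [Φ, this]
  have hd1 : ZMod.LFunction (ZMod.dft Φ) s = (-2 * I) * ZMod.LFunction Φ s := by
    rw [show ZMod.dft Φ = fun k => (-2 * I) * Φ k from funext dft_chi4,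
      LFunction_const_mul]
  have hd2 : ZMod.LFunction (ZMod.dft fun x => Φ (-x)) s =
      (2 * I) * ZMod.LFunction Φ s := by
    have : (ZMod.dft fun x => Φ (-x)) = fun k => (2 * I) * Φ k := by
      rw [hneg]
      have hsmul : (fun x : ZMod 4 => (-1 : ℂ) * Φ x) = (-1 : ℂ) • Φ := by
        funext x; simp
      rw [hsmul, map_smul]
      funext k
      rw [Pi.smul_apply, dft_chi4 k, smul_eq_mul]
      ring
    rw [this, LFunction_const_mul]
  rw [hd1, hd2]
  rw [beta_eq]
  have h4 : (4 : ℂ) ^ (s - 1) = (4 : ℂ) ^ s / 4 := by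
    rw [Complex.cpow_sub _ _ (by norm_num), Complex.cpow_one]
  push_cast
  rw [h4, Complex.sin]
  ring_nf

theorem deriv_beta (j : ℕ) (hj : 0 < j) :
    deriv dirichletBeta (1 - 2 * (j : ℂ)) =
      (-1) ^ (j + 1) * ((π : ℂ) / 2) ^ (1 - 2 * (j : ℤ)) * (Nat.factorial (2 * j - 1) : ℂ) *
        dirichletBeta (2 * (j : ℂ)) := by
  set s₀ : ℂ := 2 * (j : ℂ) with hs₀
  have hs0nat : s₀ = ((2 * j : ℕ) : ℂ) := by rw [hs₀]; push_cast; ring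
  have hre : 0 < s₀.re := by
    rw [hs0nat, Complex.natCast_re]
    exact_mod_cast (by omega : 0 < 2 * j)
  set F : ℂ → ℂ := fun s =>
      ((4 : ℂ) ^ s * (2 * (π : ℂ)) ^ (-s) * Complex.Gamma s * dirichletBeta s) *
        Complex.sin ((π : ℂ) * s / 2) with hF
  have hev : (fun s => dirichletBeta (1 - s)) =ᶠ[nhds s₀] F := by
    have hopen : {s : ℂ | 0 < s.re} ∈ nhds s₀ :=
      (continuous_re.isOpen_preimage _ isOpen_Ioi).mem_nhds hre
    filter_upwards [hopen] with z hz using beta_one_sub hz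
  -- differentiability of the non-vanishing factor
  have hβdiff : DifferentiableAt ℂ dirichletBeta s₀ := by
    have hrfl : dirichletBeta =
        DirichletCharacter.LFunction (ZMod.χ₄.ringHomComp (Int.castRingHom ℂ)) := rfl
    rw [hrfl]
    refine DirichletCharacter.differentiableAt_LFunction _ _ (Or.inl ?_)
    rw [hs0nat]
    simp only [Ne, Nat.cast_eq_one]
    omega
  have hΓdiff : DifferentiableAt ℂ Complex.Gamma s₀ := by
    refine Complex.differentiableAt_Gamma _ fun m => ?_
    rw [hs0nat]
    intro h
    have h1 := congrArg Complex.re h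
    simp only [Complex.natCast_re, Complex.neg_re] at h1
    have h2 : (0 : ℝ) ≤ (m : ℝ) := m.cast_nonneg
    have h3 : (0 : ℝ) < ((2 * j : ℕ) : ℝ) := by exact_mod_cast (by omega : 0 < 2 * j)
    linarith
  have h4diff : DifferentiableAt ℂ (fun s : ℂ => (4 : ℂ) ^ s) s₀ :=
    differentiableAt_id.const_cpow (Or.inl (by norm_num))
  have h2pidiff : DifferentiableAt ℂ (fun s : ℂ => (2 * (π : ℂ)) ^ (-s)) s₀ :=
    differentiableAt_id.neg.const_cpow
      (Or.inl (by simp [Complex.ofReal_ne_zero, Real.pi_ne_zero]))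
  have hg : DifferentiableAt ℂ
      (fun s => (4 : ℂ) ^ s * (2 * (π : ℂ)) ^ (-s) * Complex.Gamma s * dirichletBeta s) s₀ :=
    ((h4diff.mul h2pidiff).mul hΓdiff).mul hβdiff
  have hlin : HasDerivAt (fun s : ℂ => (π : ℂ) * s / 2) ((π : ℂ) / 2) s₀ := by
    simpa using ((hasDerivAt_id s₀).const_mul ((π : ℂ))).div_const 2
  have hsin : HasDerivAt (fun s : ℂ => Complex.sin ((π : ℂ) * s / 2))
      (Complex.cos ((π : ℂ) * s₀ / 2) * ((π : ℂ) / 2)) s₀ :=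
    (Complex.hasDerivAt_sin _).comp s₀ hlin
  have harg : (π : ℂ) * s₀ / 2 = (j : ℂ) * (π : ℂ) := by rw [hs₀]; ring
  have hsin0 : Complex.sin ((π : ℂ) * s₀ / 2) = 0 := by
    rw [harg]; exact Complex.sin_nat_mul_pi j
  have hcos : Complex.cos ((π : ℂ) * s₀ / 2) = (-1) ^ j := by
    rw [harg, show (j : ℂ) * (π : ℂ) = ((j * π : ℝ) : ℂ) by push_cast; ring,
      ← Complex.ofReal_cos]
    have h1 : Real.cos (j * π) = (-1) ^ j := by
      simpa using Real.cos_nat_mul_pi_sub 0 j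
    rw [h1]
    push_cast
    ring
  have hf : deriv F s₀ =
      ((4 : ℂ) ^ s₀ * (2 * (π : ℂ)) ^ (-s₀) * Complex.Gamma s₀ * dirichletBeta s₀) *
        ((-1) ^ j * ((π : ℂ) / 2)) := by
    rw [hF, deriv_fun_mul hg hsin.differentiableAt, hsin.deriv, hsin0, hcos]
    ring
  have hL : deriv (fun s => dirichletBeta (1 - s)) s₀ = -deriv dirichletBeta (1 - s₀) :=
    deriv_comp_const_sub dirichletBeta 1 s₀
  have key : deriv dirichletBeta (1 - s₀) = -(deriv F s₀) := by
    rw [← hev.deriv_eq, hL, neg_neg]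
  rw [show (1 : ℂ) - 2 * (j : ℂ) = 1 - s₀ from rfl, key, hf]
  -- now pure algebra
  have hπ : (π : ℂ) ≠ 0 := Complex.ofReal_ne_zero.mpr Real.pi_ne_zero
  have hπ2 : ((π : ℂ) / 2) ≠ 0 := div_ne_zero hπ two_ne_zero
  have hΓval : Complex.Gamma s₀ = ((2 * j - 1).factorial : ℂ) := by
    rw [show s₀ = ((2 * j - 1 : ℕ) : ℂ) + 1 by
        rw [hs0nat]
        have h5 : (2 * j - 1) + 1 = 2 * j := by omega
        rw [← h5]; push_cast; ring]
    exact Complex.Gamma_nat_eq_factorial _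
  have h4val : (4 : ℂ) ^ s₀ = (4 : ℂ) ^ (2 * j) := by
    rw [hs0nat, Complex.cpow_natCast]
  have h2pival : (2 * (π : ℂ)) ^ (-s₀) = ((2 * (π : ℂ)) ^ (2 * j))⁻¹ := by
    rw [Complex.cpow_neg, hs0nat, Complex.cpow_natCast]
  have hzpow : ((π : ℂ) / 2) ^ (1 - 2 * (j : ℤ)) =
      ((π : ℂ) / 2) * (((π : ℂ) / 2) ^ (2 * j))⁻¹ := by
    rw [zpow_sub₀ hπ2, zpow_one, show (2 * (j : ℤ)) = ((2 * j : ℕ) : ℤ) by push_cast; ring,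
      zpow_natCast, div_eq_mul_inv]
  have hkey : (2 * (π : ℂ)) ^ (2 * j) = 4 ^ (2 * j) * ((π : ℂ) / 2) ^ (2 * j) := by
    rw [← mul_pow]
    congr 1
    ring
  rw [hΓval, h4val, h2pival, hzpow, hkey, pow_succ]
  have h4ne : ((4 : ℂ) ^ (2 * j)) ≠ 0 := pow_ne_zero _ (by norm_num)
  have hp2ne : (((π : ℂ) / 2) ^ (2 * j)) ≠ 0 := pow_ne_zero _ hπ2
  field_simp

end DirichletBetaAux

/-- For every positive integer `j`,
`β'(1-2j) = (-1)^(j+1) (π/2)^(1-2j) (2j-1)! β(2j)`. -/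
theorem dirichletBeta_deriv_neg_odd (j : ℕ) (hj : 0 < j) :
    deriv dirichletBeta (1 - 2 * (j : ℂ)) =
      (-1) ^ (j + 1) * ((π : ℂ) / 2) ^ (1 - 2 * (j : ℤ)) * (Nat.factorial (2 * j - 1) : ℂ) *
        dirichletBeta (2 * (j : ℂ)) := by
  exact DirichletBetaAux.deriv_beta j hj
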